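/- Let M be a finite loopless matroid on a nonempty ground set, and let M_1, ..., M_l be the restrictions of M to its connected components. Then gamma(M) = max_i gamma(M_i), where gamma(N) = max over nonempty subsets A of the ground set of N of the ceiling of |A| / rank(A). -/

import Mathlib

open Set Matroid

variable {α : Type*}

/-- A circuit of a matroid: a minimally dependent subset of the ground set. -/
def Matroid.IsCircuit' (M : Matroid α) (C : Set α) : Prop :=
  C ⊆ M.E ∧ ¬ M.Indep C ∧ ∀ D ⊂ C, M.Indep D

/-- A matroid is loopless if no single element forms a circuit, i.e. every
singleton of the ground set is independent. -/
def Matroid.Loopless' (M : Matroid α) : Prop := ∀ e ∈ M.E, M.Indep {e}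

/-- The rank of a set `A` in a matroid `M`: the maximum size of an independent
subset of `A`. -/
noncomputable def Matroid.rk' (M : Matroid α) (A : Set α) : ℕ :=
  sSup {n | ∃ I, I ⊆ A ∧ M.Indep I ∧ I.ncard = n}

/-- `c(M)`: the maximum size of a circuit of `M`. -/
noncomputable def Matroid.cMax (M : Matroid α) : ℕ :=
  sSup {n | ∃ C, M.IsCircuit' C ∧ C.ncard = n}

/-- `γ(M) = max{⌈|A| / rank(A)⌉ : A a nonempty subset of the ground set}`. -/
noncomputable def Matroid.gamma (M : Matroid α) : ℕ :=
  sSup {n | ∃ A ⊆ M.E, A.Nonempty ∧ n = ⌈(A.ncard : ℚ) / (M.rk' A : ℚ)⌉₊}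

/-- The connected component of an element `e`: the set of `f` with `f = e` or
such that some circuit contains both `e` and `f`. -/
def Matroid.component (M : Matroid α) (e : α) : Set α :=
  {f | f = e ∨ ∃ C, M.IsCircuit' C ∧ e ∈ C ∧ f ∈ C}

namespace Matroid

variable {M : Matroid α} {A B C C₁ C₂ C₃ C₄ D I J X Y A₁ A₂ : Set α} {e f g : α}

lemma IsCircuit'.subset_ground' (h : M.IsCircuit' C) : C ⊆ M.E := h.1

lemma IsCircuit'.not_indep (h : M.IsCircuit' C) : ¬ M.Indep C := h.2.1

lemma IsCircuit'.ssubset_indep (h : M.IsCircuit' C) (hD : D ⊂ C) : M.Indep D := h.2.2 D hD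

lemma IsCircuit'.eq_of_subset (h₁ : M.IsCircuit' C₁) (h₂ : M.IsCircuit' C₂)
    (hsub : C₁ ⊆ C₂) : C₁ = C₂ := by
  by_contra hne
  exact h₁.not_indep (h₂.ssubset_indep (hsub.ssubset_of_ne hne))

lemma exists_circuit_subset_aux [M.Finite] :
    ∀ n (D : Set α), D.ncard ≤ n → D ⊆ M.E → ¬ M.Indep D → ∃ C ⊆ D, M.IsCircuit' C := by
  intro n
  induction n with
  | zero =>
    intro D hcard hDE hdep
    have hfin : D.Finite := M.set_finite D hDE
    have : D = ∅ := (ncard_eq_zero hfin).1 (le_antisymm hcard (Nat.zero_le _))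
    exact absurd (this ▸ M.empty_indep) hdep
  | succ n ih =>
    intro D hcard hDE hdep
    by_cases h : ∀ D' ⊂ D, M.Indep D'
    · exact ⟨D, subset_rfl, hDE, hdep, h⟩
    · push_neg at h
      obtain ⟨D', hss, hdep'⟩ := h
      have hfin : D.Finite := M.set_finite D hDE
      have hlt := ncard_lt_ncard hss hfin
      obtain ⟨C, hCD, hC⟩ := ih D' (by omega) (hss.subset.trans hDE) hdep'
      exact ⟨C, hCD.trans hss.subset, hC⟩

lemma exists_circuit_of_mem_closure [M.Finite] (hX : X ⊆ M.E) (he : e ∈ M.closure X)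
    (heX : e ∉ X) : ∃ C, M.IsCircuit' C ∧ e ∈ C ∧ C ⊆ insert e X := by
  obtain ⟨I, hI⟩ := M.exists_isBasis X hX
  have he' : e ∈ M.closure I := by rwa [hI.closure_eq_closure]
  have heI : e ∉ I := fun h => heX (hI.subset h)
  have hdep : M.Dep (insert e I) := hI.indep.insert_dep_iff.mpr ⟨he', heI⟩
  obtain ⟨C, hCsub, hC⟩ := exists_circuit_subset_aux (insert e I).ncard _ le_rfl
    hdep.subset_ground hdep.not_indep
  refine ⟨C, hC, ?_, fun x hx => ?_⟩
  · by_contra heC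
    refine hC.not_indep (hI.indep.subset (fun x hx => ?_))
    rcases (mem_insert_iff.1 (hCsub hx)) with rfl | h
    · exact absurd hx heC
    · exact h
  · rcases mem_insert_iff.1 (hCsub hx) with rfl | h
    · exact mem_insert _ _
    · exact mem_insert_of_mem _ (hI.subset h)

lemma IsCircuit'.mem_closure_diff (hC : M.IsCircuit' C) (he : e ∈ C) :
    e ∈ M.closure (C \ {e}) := by
  have hss : C \ {e} ⊂ C := by
    refine (diff_subset).ssubset_of_ne (fun h => ?_)
    have he' : e ∈ C \ {e} := by rw [h]; exact he
    exact he'.2 rfl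
  have hind : M.Indep (C \ {e}) := hC.ssubset_indep hss
  have hdep : M.Dep (insert e (C \ {e})) := by
    rw [insert_diff_singleton, insert_eq_self.2 he]
    exact ⟨hC.not_indep, hC.1⟩
  exact (hind.insert_dep_iff.mp hdep).1

lemma strong_elim [M.Finite] (h₁ : M.IsCircuit' C₁) (h₂ : M.IsCircuit' C₂)
    (he : e ∈ C₁) (heC₂ : e ∉ C₂) (hf₁ : f ∈ C₁) (hf₂ : f ∈ C₂) :
    ∃ C, M.IsCircuit' C ∧ e ∈ C ∧ C ⊆ (C₁ ∪ C₂) \ {f} := by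
  have hef : e ≠ f := fun h => heC₂ (h ▸ hf₂)
  set Y : Set α := (C₁ ∪ C₂) \ {e, f} with hYdef
  have hYE : Y ⊆ M.E := diff_subset.trans (union_subset h₁.1 h₂.1)
  have hfY : f ∈ M.closure Y := by
    refine M.closure_subset_closure (fun x hx => ?_) (h₂.mem_closure_diff hf₂)
    refine ⟨Or.inr hx.1, ?_⟩
    rintro (rfl | rfl)
    · exact heC₂ hx.1
    · exact hx.2 rfl
  have heY : e ∈ M.closure (insert f Y) := by
    refine (M.closure_subset_closure (fun x hx => ?_)) (h₁.mem_closure_diff he)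
    rcases eq_or_ne x f with rfl | hxf
    · exact mem_insert _ _
    · refine mem_insert_of_mem _ ⟨Or.inl hx.1, ?_⟩
      rintro (rfl | rfl)
      · exact hx.2 rfl
      · exact hxf rfl
  rw [closure_insert_eq_of_mem_closure hfY] at heY
  have heYmem : e ∉ Y := fun h => h.2 (Or.inl rfl)
  obtain ⟨C, hC, heC, hsub⟩ := exists_circuit_of_mem_closure hYE heY heYmem
  refine ⟨C, hC, heC, hsub.trans ?_⟩
  rintro x (rfl | hx)
  · exact ⟨Or.inl he, fun h => hef h⟩
  · exact ⟨hx.1, fun h => hx.2 (Or.inr h)⟩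

lemma exists_circuit_mem_mem [M.Finite] :
    ∀ n, ∀ C₁ C₂ : Set α, (C₁ ∪ C₂).ncard ≤ n → M.IsCircuit' C₁ → M.IsCircuit' C₂ →
      (C₁ ∩ C₂).Nonempty → ∀ e ∈ C₁, ∀ g ∈ C₂, ∃ K, M.IsCircuit' K ∧ e ∈ K ∧ g ∈ K := by
  intro n
  induction n using Nat.strong_induction_on with
  | _ n ih =>
  intro C₁ C₂ hn h₁ h₂ hint e he g hg
  by_cases hg₁ : g ∈ C₁
  · exact ⟨C₁, h₁, he, hg₁⟩
  by_cases he₂ : e ∈ C₂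
  · exact ⟨C₂, h₂, he₂, hg⟩
  obtain ⟨f, hf₁, hf₂⟩ := hint
  obtain ⟨C₃, h₃, heC₃, hC₃sub⟩ := strong_elim h₁ h₂ he he₂ hf₁ hf₂
  by_cases hgC₃ : g ∈ C₃
  · exact ⟨C₃, h₃, heC₃, hgC₃⟩
  have hC₃C₁ : ¬ C₃ ⊆ C₁ := by
    intro hsub
    have heq : C₃ = C₁ := h₃.eq_of_subset h₁ hsub
    have hfC₃ : f ∈ C₃ := by rw [heq]; exact hf₁
    exact (hC₃sub hfC₃).2 rfl
  obtain ⟨x, hxC₃, hxC₁⟩ := not_subset.1 hC₃C₁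
  have hxC₂ : x ∈ C₂ := ((hC₃sub hxC₃).1).resolve_left hxC₁
  obtain ⟨C₄, h₄, hgC₄, hC₄sub⟩ := strong_elim h₂ h₃ hg hgC₃ hxC₂ hxC₃
  have hC₄C₂ : ¬ C₄ ⊆ C₂ := by
    intro hsub
    have heq : C₄ = C₂ := h₄.eq_of_subset h₂ hsub
    have hxC₄ : x ∈ C₄ := by rw [heq]; exact hxC₂
    exact (hC₄sub hxC₄).2 rfl
  obtain ⟨y, hyC₄, hyC₂⟩ := not_subset.1 hC₄C₂
  have hyC₃ : y ∈ C₃ := ((hC₄sub hyC₄).1).resolve_left hyC₂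
  have hyC₁ : y ∈ C₁ := ((hC₃sub hyC₃).1).resolve_right hyC₂
  have hsub34 : C₃ ⊆ C₁ ∪ C₂ := fun z hz => (hC₃sub hz).1
  have hsub14 : C₁ ∪ C₄ ⊆ C₁ ∪ C₂ := by
    refine union_subset subset_union_left (fun z hz => ?_)
    rcases (hC₄sub hz).1 with h | h
    · exact Or.inr h
    · exact hsub34 h
  have hxnot : x ∉ C₁ ∪ C₄ := by
    rintro (h | h)
    · exact hxC₁ h
    · exact (hC₄sub h).2 rfl
  have hssub : C₁ ∪ C₄ ⊂ C₁ ∪ C₂ := by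
    refine hsub14.ssubset_of_ne (fun h => hxnot ?_)
    rw [h]; exact Or.inr hxC₂
  have hlt : (C₁ ∪ C₄).ncard < (C₁ ∪ C₂).ncard :=
    ncard_lt_ncard hssub (M.set_finite _ (union_subset h₁.1 h₂.1))
  exact ih _ (lt_of_lt_of_le hlt hn) C₁ C₄ le_rfl h₁ h₄ ⟨y, hyC₁, hyC₄⟩ e he g hgC₄

lemma mem_component_self : e ∈ M.component e := Or.inl rfl

lemma component_subset_ground (he : e ∈ M.E) : M.component e ⊆ M.E := by
  rintro f (rfl | ⟨C, hC, -, hfC⟩)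
  · exact he
  · exact hC.1 hfC

lemma IsCircuit'.subset_component [M.Finite] (hC : M.IsCircuit' C)
    (hf : f ∈ M.component e) (hfC : f ∈ C) : C ⊆ M.component e := by
  intro g hg
  rcases hf with rfl | ⟨C', hC', heC', hfC'⟩
  · exact Or.inr ⟨C, hC, hfC, hg⟩
  · obtain ⟨K, hK, heK, hgK⟩ := exists_circuit_mem_mem (C' ∪ C).ncard C' C le_rfl hC' hC
      ⟨f, hfC', hfC⟩ e heC' g hg
    exact Or.inr ⟨K, hK, heK, hgK⟩

lemma rk'_set_bddAbove [M.Finite] (A : Set α) :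
    BddAbove {n | ∃ I, I ⊆ A ∧ M.Indep I ∧ I.ncard = n} := by
  refine ⟨M.E.ncard, ?_⟩
  rintro n ⟨I, hIA, hI, rfl⟩
  exact ncard_le_ncard hI.subset_ground M.ground_finite

lemma IsBasis.rk'_eq [M.Finite] (hI : M.IsBasis I A) : M.rk' A = I.ncard := by
  refine le_antisymm (csSup_le ⟨0, ∅, empty_subset _, M.empty_indep, by simp⟩ ?_)
    (le_csSup (rk'_set_bddAbove A) ⟨I, hI.subset, hI.indep, rfl⟩)
  rintro n ⟨J, hJA, hJ, rfl⟩
  obtain ⟨I', hI', hJI'⟩ := hJ.subset_isBasis_of_subset hJA hI.subset_ground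
  have h1 : (M ↾ A).IsBase I' := (isBase_restrict_iff hI.subset_ground).2 hI'
  have h2 : (M ↾ A).IsBase I := (isBase_restrict_iff hI.subset_ground).2 hI
  have hfin : I'.Finite := M.set_finite I' hI'.indep.subset_ground
  calc J.ncard ≤ I'.ncard := ncard_le_ncard hJI' hfin
    _ = I.ncard := h1.ncard_eq_ncard_of_isBase h2

lemma rk'_restrict (hAX : A ⊆ X) : (M ↾ X).rk' A = M.rk' A := by
  unfold Matroid.rk'
  congr 1
  ext n
  simp only [mem_setOf_eq, restrict_indep_iff]
  constructor
  · rintro ⟨I, hIA, ⟨hI, -⟩, rfl⟩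
    exact ⟨I, hIA, hI, rfl⟩
  · rintro ⟨I, hIA, hI, rfl⟩
    exact ⟨I, hIA, ⟨hI, hIA.trans hAX⟩, rfl⟩

lemma one_le_rk' [M.Finite] (hL : M.Loopless') (hA : A ⊆ M.E) (hne : A.Nonempty) :
    1 ≤ M.rk' A := by
  obtain ⟨a, ha⟩ := hne
  exact le_csSup (rk'_set_bddAbove A)
    ⟨{a}, singleton_subset_iff.2 ha, hL a (hA ha), ncard_singleton a⟩

lemma rk'_add [M.Finite] (hA₁ : A₁ ⊆ M.E) (hA₂ : A₂ ⊆ M.E) (hdj : Disjoint A₁ A₂)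
    (hsep : ∀ C, M.IsCircuit' C → C ⊆ A₁ ∪ A₂ → C ⊆ A₁ ∨ C ⊆ A₂) :
    M.rk' (A₁ ∪ A₂) = M.rk' A₁ + M.rk' A₂ := by
  obtain ⟨I₁, hI₁⟩ := M.exists_isBasis A₁ hA₁
  obtain ⟨I₂, hI₂⟩ := M.exists_isBasis A₂ hA₂
  have hIdj : Disjoint I₁ I₂ := hdj.mono hI₁.subset hI₂.subset
  have hIsub : I₁ ∪ I₂ ⊆ A₁ ∪ A₂ := union_subset_union hI₁.subset hI₂.subset
  have hind : M.Indep (I₁ ∪ I₂) := by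
    by_contra hdep
    obtain ⟨C, hCsub, hC⟩ := exists_circuit_subset_aux (I₁ ∪ I₂).ncard _ le_rfl
      (union_subset hI₁.indep.subset_ground hI₂.indep.subset_ground) hdep
    rcases hsep C hC (hCsub.trans hIsub) with h | h
    · refine hC.not_indep (hI₁.indep.subset (fun z hz => ?_))
      rcases hCsub hz with hz1 | hz2
      · exact hz1
      · exact absurd (hI₂.subset hz2) (fun hh => (disjoint_left.1 hdj) (h hz) hh)
    · refine hC.not_indep (hI₂.indep.subset (fun z hz => ?_))
      rcases hCsub hz with hz1 | hz2
      · exact absurd (hI₁.subset hz1) (fun hh => (disjoint_right.1 hdj) (h hz) hh)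
      · exact hz2
  have hbasis : M.IsBasis (I₁ ∪ I₂) (A₁ ∪ A₂) := by
    refine hind.isBasis_of_forall_insert hIsub ?_
    rintro x ⟨hxA, hxI⟩
    have hground : insert x (I₁ ∪ I₂) ⊆ M.E := by
      refine insert_subset ?_ hind.subset_ground
      rcases hxA with h | h
      · exact hA₁ h
      · exact hA₂ h
    rcases hxA with h | h
    · exact (hI₁.insert_dep ⟨h, fun hh => hxI (Or.inl hh)⟩).superset
        (insert_subset_insert subset_union_left) hground
    · exact (hI₂.insert_dep ⟨h, fun hh => hxI (Or.inr hh)⟩).superset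
        (insert_subset_insert subset_union_right) hground
  rw [hbasis.rk'_eq, hI₁.rk'_eq, hI₂.rk'_eq,
    ncard_union_eq hIdj (M.set_finite I₁ hI₁.indep.subset_ground)
      (M.set_finite I₂ hI₂.indep.subset_ground)]

lemma gamma_set_bddAbove [M.Finite] (hL : M.Loopless') :
    M.E.ncard ∈ upperBounds {n | ∃ A ⊆ M.E, A.Nonempty ∧
      n = ⌈(A.ncard : ℚ) / (M.rk' A : ℚ)⌉₊} := by
  rintro n ⟨A, hA, hne, rfl⟩
  have hr : 1 ≤ M.rk' A := one_le_rk' hL hA hne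
  have h1 : ⌈(A.ncard : ℚ) / (M.rk' A : ℚ)⌉₊ ≤ A.ncard := by
    rw [Nat.ceil_le]
    exact div_le_self (by positivity) (by exact_mod_cast hr)
  exact h1.trans (ncard_le_ncard hA M.ground_finite)

lemma le_gamma [M.Finite] (hL : M.Loopless') (hA : A ⊆ M.E) (hne : A.Nonempty) :
    ⌈(A.ncard : ℚ) / (M.rk' A : ℚ)⌉₊ ≤ M.gamma :=
  le_csSup ⟨M.E.ncard, gamma_set_bddAbove hL⟩ ⟨A, hA, hne, rfl⟩

lemma gamma_le_ncard_ground [M.Finite] (hL : M.Loopless') : M.gamma ≤ M.E.ncard :=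
  csSup_le' (gamma_set_bddAbove hL)

lemma loopless_restrict (hL : M.Loopless') (hX : X ⊆ M.E) : (M ↾ X).Loopless' := by
  intro x hx
  rw [restrict_ground_eq] at hx
  exact restrict_indep_iff.2 ⟨hL x (hX hx), singleton_subset_iff.2 hx⟩

lemma ceil_add_div_le_max (a₁ a₂ r₁ r₂ : ℕ) (h₁ : 1 ≤ r₁) (h₂ : 1 ≤ r₂) :
    ⌈((a₁ + a₂ : ℕ) : ℚ) / ((r₁ + r₂ : ℕ) : ℚ)⌉₊ ≤
      max ⌈(a₁ : ℚ) / (r₁ : ℚ)⌉₊ ⌈(a₂ : ℚ) / (r₂ : ℚ)⌉₊ := by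
  set m : ℕ := max ⌈(a₁ : ℚ) / (r₁ : ℚ)⌉₊ ⌈(a₂ : ℚ) / (r₂ : ℚ)⌉₊ with hm
  have hr₁ : (0 : ℚ) < (r₁ : ℚ) := by exact_mod_cast h₁
  have hr₂ : (0 : ℚ) < (r₂ : ℚ) := by exact_mod_cast h₂
  have ha₁ : (a₁ : ℚ) ≤ (m : ℚ) * r₁ := by
    have hle : ((⌈(a₁ : ℚ) / (r₁ : ℚ)⌉₊ : ℕ) : ℚ) ≤ (m : ℚ) := by
      exact_mod_cast le_max_left ⌈(a₁ : ℚ) / (r₁ : ℚ)⌉₊ ⌈(a₂ : ℚ) / (r₂ : ℚ)⌉₊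
    have h := (Nat.le_ceil ((a₁ : ℚ) / (r₁ : ℚ))).trans hle
    calc (a₁ : ℚ) = (a₁ / r₁) * r₁ := by field_simp
      _ ≤ (m : ℚ) * r₁ := mul_le_mul_of_nonneg_right h hr₁.le
  have ha₂ : (a₂ : ℚ) ≤ (m : ℚ) * r₂ := by
    have hle : ((⌈(a₂ : ℚ) / (r₂ : ℚ)⌉₊ : ℕ) : ℚ) ≤ (m : ℚ) := by
      exact_mod_cast le_max_right ⌈(a₁ : ℚ) / (r₁ : ℚ)⌉₊ ⌈(a₂ : ℚ) / (r₂ : ℚ)⌉₊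
    have h := (Nat.le_ceil ((a₂ : ℚ) / (r₂ : ℚ))).trans hle
    calc (a₂ : ℚ) = (a₂ / r₂) * r₂ := by field_simp
      _ ≤ (m : ℚ) * r₂ := mul_le_mul_of_nonneg_right h hr₂.le
  rw [Nat.ceil_le]
  rw [div_le_iff₀ (by positivity)]
  push_cast
  nlinarith [ha₁, ha₂]

lemma key_lemma [M.Finite] (hL : M.Loopless') :
    ∀ n (A : Set α), A.ncard ≤ n → A ⊆ M.E → A.Nonempty →
      ∃ e ∈ M.E, ⌈(A.ncard : ℚ) / (M.rk' A : ℚ)⌉₊ ≤ (M ↾ M.component e).gamma := by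
  intro n
  induction n with
  | zero =>
    intro A hcard hA hne
    have hfin : A.Finite := M.set_finite A hA
    have := (ncard_pos hfin).2 hne
    omega
  | succ n ih =>
    intro A hcard hA hne
    obtain ⟨e₀, he₀⟩ := hne
    have he₀E : e₀ ∈ M.E := hA he₀
    have hcompE : M.component e₀ ⊆ M.E := component_subset_ground he₀E
    haveI hMfin : (M ↾ M.component e₀).Finite :=
      restrict_finite (M.ground_finite.subset hcompE)
    set A₁ : Set α := A ∩ M.component e₀ with hA₁def
    set A₂ : Set α := A \ M.component e₀ with hA₂def
    by_cases h2 : A₂.Nonempty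
    · have h1 : A₁.Nonempty := ⟨e₀, he₀, mem_component_self⟩
      have hfin : A.Finite := M.set_finite A hA
      have hA₁E : A₁ ⊆ M.E := inter_subset_left.trans hA
      have hA₂E : A₂ ⊆ M.E := diff_subset.trans hA
      have hdj : Disjoint A₁ A₂ := by
        rw [disjoint_left]
        rintro x ⟨-, hx⟩ hx2
        exact hx2.2 hx
      have hunion : A₁ ∪ A₂ = A := inter_union_diff A _
      have hsep : ∀ C, M.IsCircuit' C → C ⊆ A₁ ∪ A₂ → C ⊆ A₁ ∨ C ⊆ A₂ := by
        intro C hC hCsub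
        by_cases hmeet : (C ∩ M.component e₀).Nonempty
        · left
          obtain ⟨f, hfC, hfcomp⟩ := hmeet
          have hCcomp : C ⊆ M.component e₀ := hC.subset_component hfcomp hfC
          intro x hx
          have hxA : x ∈ A := by rw [← hunion]; exact hCsub hx
          exact ⟨hxA, hCcomp hx⟩
        · right
          intro x hx
          rcases hCsub hx with h | h
          · exact absurd ⟨x, hx, h.2⟩ hmeet
          · exact h
      have hrkadd : M.rk' A = M.rk' A₁ + M.rk' A₂ := by
        rw [← hunion]
        exact rk'_add hA₁E hA₂E hdj hsep
      have hcardadd : A.ncard = A₁.ncard + A₂.ncard := by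
        rw [← hunion]
        exact ncard_union_eq hdj (hfin.subset inter_subset_left) (hfin.subset diff_subset)
      have hr₁ := one_le_rk' hL hA₁E h1
      have hr₂ := one_le_rk' hL hA₂E h2
      have harith := ceil_add_div_le_max A₁.ncard A₂.ncard (M.rk' A₁) (M.rk' A₂) hr₁ hr₂
      rw [← hcardadd, ← hrkadd] at harith
      have hlt₁ : A₁.ncard < A.ncard := by
        refine ncard_lt_ncard ?_ hfin
        refine inter_subset_left.ssubset_of_ne (fun h => ?_)
        obtain ⟨x, hxA, hxc⟩ := h2
        have hx' : x ∈ A ∩ M.component e₀ := by rw [h]; exact hxA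
        exact hxc hx'.2
      have hlt₂ : A₂.ncard < A.ncard := by
        refine ncard_lt_ncard ?_ hfin
        refine diff_subset.ssubset_of_ne (fun h => ?_)
        have hx' : e₀ ∈ A \ M.component e₀ := by rw [h]; exact he₀
        exact hx'.2 mem_component_self
      obtain ⟨e₁, he₁, hle₁⟩ := ih A₁ (by omega) hA₁E h1
      obtain ⟨e₂, he₂, hle₂⟩ := ih A₂ (by omega) hA₂E h2
      rcases max_choice ⌈(A₁.ncard : ℚ) / (M.rk' A₁ : ℚ)⌉₊
          ⌈(A₂.ncard : ℚ) / (M.rk' A₂ : ℚ)⌉₊ with hmax | hmax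
      · rw [hmax] at harith
        exact ⟨e₁, he₁, harith.trans hle₁⟩
      · rw [hmax] at harith
        exact ⟨e₂, he₂, harith.trans hle₂⟩
    · have hsub : A ⊆ M.component e₀ := by
        intro x hx
        by_contra h
        exact h2 ⟨x, hx, h⟩
      refine ⟨e₀, he₀E, ?_⟩
      rw [← rk'_restrict hsub]
      exact le_gamma (loopless_restrict hL hcompE)
        (by rw [restrict_ground_eq]; exact hsub) ⟨e₀, he₀⟩

end Matroid

/-- For a finite loopless matroid `M` on a nonempty ground set, `γ(M)` equals the
maximum, over the connected components of `M`, of `γ` of the restriction of `M`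
to that component. -/
theorem gamma_eq_sSup_components (M : Matroid α) [M.Finite]
    (hLoopless : M.Loopless') (hne : M.E.Nonempty) :
    M.gamma = sSup {n | ∃ e ∈ M.E, n = (M ↾ M.component e).gamma} := by
  have hTbdd : BddAbove {n | ∃ e ∈ M.E, n = (M ↾ M.component e).gamma} := by
    refine ⟨M.E.ncard, ?_⟩
    rintro n ⟨e, heE, rfl⟩
    have hcompE : M.component e ⊆ M.E := Matroid.component_subset_ground heE
    haveI : (M ↾ M.component e).Finite :=
      Matroid.restrict_finite (M.ground_finite.subset hcompE)
    refine (Matroid.gamma_le_ncard_ground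
      (Matroid.loopless_restrict hLoopless hcompE)).trans ?_
    rw [Matroid.restrict_ground_eq]
    exact Set.ncard_le_ncard hcompE M.ground_finite
  apply le_antisymm
  · refine csSup_le' ?_
    rintro n ⟨A, hA, hAne, rfl⟩
    obtain ⟨e, heE, hle⟩ := Matroid.key_lemma hLoopless A.ncard A le_rfl hA hAne
    exact hle.trans (le_csSup hTbdd ⟨e, heE, rfl⟩)
  · refine csSup_le' ?_
    rintro n ⟨e, heE, rfl⟩
    have hcompE : M.component e ⊆ M.E := Matroid.component_subset_ground heE
    haveI : (M ↾ M.component e).Finite :=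
      Matroid.restrict_finite (M.ground_finite.subset hcompE)
    refine csSup_le' ?_
    rintro m ⟨A, hA, hAne, rfl⟩
    rw [Matroid.restrict_ground_eq] at hA
    rw [Matroid.rk'_restrict hA]
    exact Matroid.le_gamma hLoopless (hA.trans hcompE) hAne
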